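/- Suppose t_∞ := lim_{n→∞} (l_1⋯l_n)/(r_1⋯r_n) exists and equals 0. Then for any non-decreasing sequence of stopping times (T_m)_{m≥1} with E[T_m] < ∞ for every m and T_m → T_∂ almost surely, E[X_{T_m}] → +∞ as m → ∞. -/

import Mathlib

open MeasureTheory Filter Topology Finset
open scoped ENNReal NNReal Classical

/-- Partial products `t_n = (l_1 ⋯ l_n)/(r_1 ⋯ r_n)`, with `t_0 = 1`. -/
noncomputable def tp (l r : ℕ → ℝ) (n : ℕ) : ℝ :=
  (∏ i ∈ Finset.Icc 1 n, l i) / (∏ i ∈ Finset.Icc 1 n, r i)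

/-- `x_n = Σ_{i=0}^{n-1} t_i`. -/
noncomputable def xp (l r : ℕ → ℝ) (n : ℕ) : ℝ :=
  ∑ i ∈ Finset.range n, tp l r i

/-- The natural filtration of the process `X` (σ-algebra generated by `X_0, …, X_m`). -/
def natFilt {Ω : Type*} (X : ℕ → Ω → ℕ) (m : ℕ) : MeasurableSpace Ω :=
  ⨆ i ∈ Finset.range (m + 1), MeasurableSpace.comap (X i) ⊤

/-- A birth–death chain on ℕ started at `k`, with up–probabilities `r n` and
down–probabilities `l n` for states `n ≥ 1`, and `0` absorbing.  The Markov
property is encoded by conditioning on arbitrary events of the natural filtration. -/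
structure IsBDChain {Ω : Type*} [MeasurableSpace Ω] (P : Measure Ω)
    (X : ℕ → Ω → ℕ) (k : ℕ) (l r : ℕ → ℝ) : Prop where
  isProb : IsProbabilityMeasure P
  one_le_k : 1 ≤ k
  l_pos : ∀ n, 1 ≤ n → 0 < l n
  r_pos : ∀ n, 1 ≤ n → 0 < r n
  lr_one : ∀ n, 1 ≤ n → l n + r n = 1
  meas : ∀ m, Measurable (X m)
  init : ∀ᵐ ω ∂P, X 0 ω = k
  absorb : ∀ᵐ ω ∂P, ∀ m, X m ω = 0 → X (m + 1) ω = 0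
  step_up : ∀ m n, 1 ≤ n → ∀ A : Set Ω, MeasurableSet[natFilt X m] A →
    P (A ∩ {ω | X m ω = n ∧ X (m + 1) ω = n + 1}) =
      ENNReal.ofReal (r n) * P (A ∩ {ω | X m ω = n})
  step_down : ∀ m n, 1 ≤ n → ∀ A : Set Ω, MeasurableSet[natFilt X m] A →
    P (A ∩ {ω | X m ω = n ∧ X (m + 1) ω = n - 1}) =
      ENNReal.ofReal (l n) * P (A ∩ {ω | X m ω = n})

/-- A (finite-valued) stopping time for the natural filtration of `X`. -/
def IsBDStop {Ω : Type*} (X : ℕ → Ω → ℕ) (T : Ω → ℕ) : Prop :=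
  ∀ m, MeasurableSet[natFilt X m] {ω | T ω = m}

/-- An extended-ℕ-valued stopping time for the natural filtration of `X`. -/
def IsBDStopE {Ω : Type*} (X : ℕ → Ω → ℕ) (T : Ω → ℕ∞) : Prop :=
  ∀ m : ℕ, MeasurableSet[natFilt X m] {ω | T ω = (m : ℕ∞)}

/-- First hitting time of the set `S ⊆ ℕ` by the path `m ↦ X m ω`, valued in `ℕ∞`. -/
noncomputable def hitTime {Ω : Type*} (X : ℕ → Ω → ℕ) (S : Set ℕ) (ω : Ω) : ℕ∞ :=
  sInf ((fun m : ℕ => (m : ℕ∞)) '' {m | X m ω ∈ S})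

/-- `T_∂`: the first hitting time of `0`, with value `∞` if `0` is never hit. -/
noncomputable def hit0 {Ω : Type*} (X : ℕ → Ω → ℕ) (ω : Ω) : ℕ∞ :=
  hitTime X {0} ω

/-- `G_T^n`: the number of times `m` with `0 ≤ m ≤ T-1` and `X_m = n` (finite `T`). -/
def count {Ω : Type*} (X : ℕ → Ω → ℕ) (n : ℕ) (T : Ω → ℕ) (ω : Ω) : ℕ :=
  ((Finset.range (T ω)).filter fun m => X m ω = n).card

/-- `G_τ^n` for an `ℕ∞`-valued time `τ`, valued in `ℝ≥0∞`. -/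
noncomputable def countE {Ω : Type*} (X : ℕ → Ω → ℕ) (n : ℕ) (τ : Ω → ℕ∞) (ω : Ω) : ℝ≥0∞ :=
  ∑' m : ℕ, if (m : ℕ∞) < τ ω ∧ X m ω = n then 1 else 0


set_option linter.unusedSectionVars false
set_option linter.unusedVariables false
variable {l r : ℕ → ℝ}

section basics
variable (hl : ∀ n, 1 ≤ n → 0 < l n) (hr : ∀ n, 1 ≤ n → 0 < r n)
         (hlr : ∀ n, 1 ≤ n → l n + r n = 1)

lemma tp_zero : tp l r 0 = 1 := by simp [tp]

include hl hr in
lemma tp_pos (n : ℕ) : 0 < tp l r n := by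
  apply div_pos <;> exact Finset.prod_pos (fun i hi => by
    first
      | exact hl i (Finset.mem_Icc.mp hi).1
      | exact hr i (Finset.mem_Icc.mp hi).1)

include hl hr in
lemma tp_succ (n : ℕ) : tp l r (n+1) = tp l r n * (l (n+1) / r (n+1)) := by
  unfold tp
  rw [Finset.prod_Icc_succ_top (by omega), Finset.prod_Icc_succ_top (by omega)]
  have h1 : (∏ i ∈ Finset.Icc 1 n, r i) ≠ 0 :=
    ne_of_gt (Finset.prod_pos (fun i hi => hr i (Finset.mem_Icc.mp hi).1))
  have h2 : r (n+1) ≠ 0 := ne_of_gt (hr (n+1) (by omega))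
  field_simp

lemma xp_zero : xp l r 0 = 0 := by simp [xp]

lemma xp_succ (n : ℕ) : xp l r (n+1) = xp l r n + tp l r n := by
  simp [xp, Finset.sum_range_succ]

include hl hr in
lemma xp_mono : Monotone (xp l r) := by
  apply monotone_nat_of_le_succ
  intro n
  rw [xp_succ]
  linarith [tp_pos hl hr n]

include hl hr in
lemma xp_nonneg (n : ℕ) : 0 ≤ xp l r n := by
  simpa [xp_zero] using xp_mono hl hr (Nat.zero_le n)

include hl hr in
lemma rt_eq_lt (n : ℕ) (hn : 1 ≤ n) : r n * tp l r n = l n * tp l r (n-1) := by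
  obtain ⟨p, rfl⟩ : ∃ p, n = p + 1 := ⟨n - 1, by omega⟩
  rw [tp_succ hl hr p]
  have h2 : r (p+1) ≠ 0 := ne_of_gt (hr (p+1) (by omega))
  field_simp
  simp only [Nat.add_sub_cancel, Nat.add_sub_cancel_left]
  ring

include hl hr hlr in
lemma xp_harm (n : ℕ) (hn : 1 ≤ n) :
    r n * xp l r (n+1) + l n * xp l r (n-1) = xp l r n := by
  obtain ⟨p, rfl⟩ : ∃ p, n = p + 1 := ⟨n - 1, by omega⟩
  have h1 : xp l r (p+1+1) = xp l r (p+1) + tp l r (p+1) := xp_succ _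
  have h2 : xp l r (p+1) = xp l r p + tp l r p := xp_succ _
  have h3 := rt_eq_lt hl hr (p+1) (by omega)
  have h4 := hlr (p+1) (by omega)
  simp only [Nat.add_sub_cancel] at *
  linear_combination (r (p+1)) * h1 - (l (p+1)) * h2 + h3 + (xp l r (p+1)) * h4

/-- the kinked function `g_j(n) = x(min n j)` -/
noncomputable def gj (l r : ℕ → ℝ) (j n : ℕ) : ℝ := xp l r (min n j)

include hl hr hlr in
lemma gj_harm (j : ℕ) (hj : 1 ≤ j) (n : ℕ) (hn : 1 ≤ n) :
    r n * gj l r j (n+1) + l n * gj l r j (n-1)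
      + (if n = j then l j * tp l r (j-1) else 0) = gj l r j n := by
  rcases lt_trichotomy n j with h | h | h
  · have e1 : min (n+1) j = n + 1 := by omega
    have e2 : min (n-1) j = n - 1 := by omega
    have e3 : min n j = n := by omega
    rw [gj, gj, gj, e1, e2, e3, if_neg (by omega), add_zero]
    exact xp_harm hl hr hlr n hn
  · subst h
    have e1 : min (n+1) n = n := by omega
    have e2 : min (n-1) n = n - 1 := by omega
    have e3 : min n n = n := by omega
    rw [gj, gj, gj, e1, e2, e3, if_pos rfl]
    obtain ⟨p, rfl⟩ : ∃ p, n = p + 1 := ⟨n - 1, by omega⟩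
    have h2 : xp l r (p+1) = xp l r p + tp l r p := xp_succ _
    have h4 := hlr (p+1) (by omega)
    have h3 := rt_eq_lt hl hr (p+1) (by omega)
    simp only [Nat.add_sub_cancel] at *
    linear_combination -(l (p+1)) * h2 + (xp l r (p+1)) * h4
  · have e1 : min (n+1) j = j := by omega
    have e2 : min (n-1) j = j := by omega
    have e3 : min n j = j := by omega
    rw [gj, gj, gj, e1, e2, e3, if_neg (by omega), add_zero]
    have h4 := hlr n hn
    linear_combination (xp l r j) * h4

include hl hr in
lemma gj_nonneg (j n : ℕ) : 0 ≤ gj l r j n := xp_nonneg hl hr _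

include hl hr in
lemma gj_le (j n : ℕ) : gj l r j n ≤ xp l r j := xp_mono hl hr (min_le_right _ _)
end basics

section meas
variable {Ω : Type*} [MeasurableSpace Ω] {X : ℕ → Ω → ℕ}

lemma natFilt_le (hX : ∀ i, Measurable (X i)) (m : ℕ) :
    natFilt X m ≤ (inferInstance : MeasurableSpace Ω) := by
  refine iSup_le fun i => iSup_le fun _ => ?_
  intro s hs
  obtain ⟨s', -, rfl⟩ := hs
  exact hX i (by trivial)

lemma natFilt_mono {m m' : ℕ} (h : m ≤ m') : natFilt X m ≤ natFilt X m' := by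
  refine iSup_le fun i => iSup_le fun hi => ?_
  exact le_iSup₂ (f := fun i (_ : i ∈ Finset.range (m' + 1)) => MeasurableSpace.comap (X i) ⊤)
    i (by simp at hi ⊢; omega)

lemma measurableSet_X_eq {m i n : ℕ} (h : i ≤ m) :
    MeasurableSet[natFilt X m] {ω | X i ω = n} := by
  have : MeasurableSpace.comap (X i) ⊤ ≤ natFilt X m :=
    le_iSup₂ (f := fun i (_ : i ∈ Finset.range (m + 1)) => MeasurableSpace.comap (X i) ⊤)
      i (by simp; omega)
  exact this _ ⟨{n}, trivial, rfl⟩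

lemma stop_meas_le {T : Ω → ℕ} (hT : IsBDStop X T) {j m : ℕ} (h : j ≤ m) :
    MeasurableSet[natFilt X m] {ω | T ω = j} :=
  natFilt_mono h _ (hT j)

lemma stop_gt_meas {T : Ω → ℕ} (hT : IsBDStop X T) (m : ℕ) :
    MeasurableSet[natFilt X m] {ω | m < T ω} := by
  have : {ω | m < T ω} = (⋃ j ∈ Finset.range (m+1), {ω | T ω = j})ᶜ := by
    ext ω
    simp only [Set.mem_setOf_eq, Set.mem_compl_iff, Set.mem_iUnion, Finset.mem_range,
      exists_prop, not_exists, not_and]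
    constructor
    · intro h j hj hTj; omega
    · intro h
      by_contra hc
      exact h (T ω) (by omega) rfl
  rw [this]
  exact (MeasurableSet.biUnion (Finset.range (m+1)).countable_toSet
    (fun j hj => stop_meas_le hT (by simpa using Nat.lt_succ_iff.mp (Finset.mem_range.mp hj)))).compl

lemma stop_measurable (hX : ∀ i, Measurable (X i)) {T : Ω → ℕ} (hT : IsBDStop X T) :
    Measurable T := by
  apply measurable_to_countable'
  intro j
  exact natFilt_le hX j _ (hT j)

lemma meas_pair {β : Type*} [MeasurableSpace β] {τ : Ω → ℕ} (hτ : Measurable τ)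
    {H : ℕ → Ω → β} (hH : ∀ j, Measurable (H j)) :
    Measurable fun ω => H (τ ω) ω := by
  intro s hs
  have : (fun ω => H (τ ω) ω) ⁻¹' s = ⋃ j, ({ω | τ ω = j} ∩ (H j) ⁻¹' s) := by
    ext ω
    simp only [Set.mem_preimage, Set.mem_iUnion, Set.mem_inter_iff, Set.mem_setOf_eq]
    constructor
    · intro h; exact ⟨τ ω, rfl, h⟩
    · rintro ⟨j, hj, h⟩; rwa [hj]
  rw [this]
  exact MeasurableSet.iUnion fun j => (hτ (measurableSet_singleton j)).inter (hH j hs)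

end meas

-- ### a.s. path facts and decomposition

section chain
variable {Ω : Type*} [MeasurableSpace Ω] {P : Measure Ω} {X : ℕ → Ω → ℕ} {k : ℕ}

lemma null_of_add (hP : P Set.univ ≠ ⊤) {E U D : Set Ω} (hE : MeasurableSet E)
    (hU : MeasurableSet U) (hD : MeasurableSet D) (hUD : Disjoint U D)
    (h : P (E ∩ U) + P (E ∩ D) = P E) : P (E \ (U ∪ D)) = 0 := by
  have h1 : P (E ∩ (U ∪ D)) = P (E ∩ U) + P (E ∩ D) := by
    rw [Set.inter_union_distrib_left]
    exact measure_union (hUD.mono Set.inter_subset_right Set.inter_subset_right) (hE.inter hD)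
  have h2 : P (E ∩ (U ∪ D)) + P (E \ (U ∪ D)) = P E :=
    measure_inter_add_diff E (hU.union hD)
  rw [h1, h] at h2
  have hfin : P E ≠ ⊤ := ne_top_of_le_ne_top hP (measure_mono (Set.subset_univ E))
  nth_rewrite 2 [← add_zero (P E)] at h2
  exact (ENNReal.add_right_inj hfin).mp h2

lemma ae_steps (hC : IsBDChain P X k l r) :
    ∀ᵐ ω ∂P, ∀ m, (X m ω = 0 → X (m+1) ω = 0) ∧
      (1 ≤ X m ω → X (m+1) ω = X m ω + 1 ∨ X (m+1) ω = X m ω - 1) := by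
  haveI := hC.isProb
  have key : ∀ m n : ℕ, 1 ≤ n →
      P ({ω | X m ω = n} \ ({ω | X (m+1) ω = n+1} ∪ {ω | X (m+1) ω = n-1})) = 0 := by
    intro m n hn
    apply null_of_add (by simp)
      (natFilt_le hC.meas m _ (measurableSet_X_eq (le_refl m)))
      (hC.meas (m+1) (MeasurableSet.singleton (n+1)))
      (hC.meas (m+1) (MeasurableSet.singleton (n-1)))
    · rw [Set.disjoint_left]
      intro ω h1 h2
      have h1' : X (m+1) ω = n + 1 := h1
      have h2' : X (m+1) ω = n - 1 := h2
      omega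
    · have hu := hC.step_up m n hn Set.univ MeasurableSet.univ
      have hd := hC.step_down m n hn Set.univ MeasurableSet.univ
      simp only [Set.univ_inter] at hu hd
      have e1 : {ω | X m ω = n} ∩ {ω | X (m+1) ω = n+1} = {ω | X m ω = n ∧ X (m+1) ω = n+1} := by
        ext ω; simp
      have e2 : {ω | X m ω = n} ∩ {ω | X (m+1) ω = n-1} = {ω | X m ω = n ∧ X (m+1) ω = n-1} := by
        ext ω; simp
      show P ({ω | X m ω = n} ∩ {ω | X (m+1) ω = n+1}) + P ({ω | X m ω = n} ∩ {ω | X (m+1) ω = n-1}) = P {ω | X m ω = n}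
      rw [e1, e2, hu, hd, ← add_mul]
      have : ENNReal.ofReal (r n) + ENNReal.ofReal (l n) = 1 := by
        rw [← ENNReal.ofReal_add (le_of_lt (hC.r_pos n hn)) (le_of_lt (hC.l_pos n hn))]
        rw [show r n + l n = 1 by linarith [hC.lr_one n hn]]
        exact ENNReal.ofReal_one
      rw [this, one_mul]
  have h2 : ∀ᵐ ω ∂P, ∀ m n : ℕ, 1 ≤ n → ¬ (ω ∈
      ({ω | X m ω = n} \ ({ω | X (m+1) ω = n+1} ∪ {ω | X (m+1) ω = n-1}))) := by
    rw [ae_all_iff]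
    intro m
    rw [ae_all_iff]
    intro n
    by_cases hn : 1 ≤ n
    · filter_upwards [measure_eq_zero_iff_ae_notMem.mp (key m n hn)] with ω hω
      intro _; exact hω
    · filter_upwards with ω h; omega
  filter_upwards [h2, hC.absorb] with ω hω habs
  intro m
  refine ⟨habs m, fun hm => ?_⟩
  have h3 := hω m (X m ω) hm
  have h4 : ω ∈ {ω' | X (m+1) ω' = X m ω + 1} ∪ {ω' | X (m+1) ω' = X m ω - 1} := by
    by_contra hc
    exact h3 ⟨rfl, hc⟩
  rcases h4 with h5 | h5
  · exact Or.inl h5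
  · exact Or.inr h5

lemma lint_decomp (P : Measure Ω) {B : Set Ω} (hB : MeasurableSet B) {Y : Ω → ℕ}
    (hY : Measurable Y) (f : ℕ → ℝ≥0∞) :
    ∫⁻ ω in B, f (Y ω) ∂P = ∑' n, f n * P (B ∩ {ω | Y ω = n}) := by
  have hBu : B = ⋃ n, B ∩ {ω | Y ω = n} := by
    ext ω; simp only [Set.mem_iUnion, Set.mem_inter_iff, Set.mem_setOf_eq]
    constructor
    · intro h; exact ⟨Y ω, h, rfl⟩
    · rintro ⟨n, h, -⟩; exact h
  have hmeas : ∀ n, MeasurableSet (B ∩ {ω | Y ω = n}) :=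
    fun n => hB.inter (hY (measurableSet_singleton n))
  have hdisj : Pairwise (Function.onFun Disjoint fun n => B ∩ {ω | Y ω = n}) := by
    intro a b hab
    simp only [Function.onFun, Set.disjoint_left]
    rintro ω ⟨-, h1⟩ ⟨-, h2⟩
    simp only [Set.mem_setOf_eq] at h1 h2
    exact hab (h1 ▸ h2.symm ▸ rfl)
  calc ∫⁻ ω in B, f (Y ω) ∂P = ∫⁻ ω in ⋃ n, B ∩ {ω | Y ω = n}, f (Y ω) ∂P := by rw [← hBu]
    _ = ∑' n, ∫⁻ ω in B ∩ {ω | Y ω = n}, f (Y ω) ∂P := lintegral_iUnion hmeas hdisj _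
    _ = ∑' n, f n * P (B ∩ {ω | Y ω = n}) := by
        refine tsum_congr fun n => ?_
        rw [setLIntegral_congr_fun_ae (hmeas n) ?_, setLIntegral_const]
        exact Filter.Eventually.of_forall fun ω hω => by
          simp only [Set.mem_inter_iff, Set.mem_setOf_eq] at hω
          rw [hω.2]

end chain

section onestep
variable {Ω : Type*} [MeasurableSpace Ω] {P : Measure Ω} {X : ℕ → Ω → ℕ} {k : ℕ}

lemma lint_piece (P : Measure Ω) {B : Set Ω} (hB : MeasurableSet B) {Y : Ω → ℕ}
    (hY : Measurable Y) (f : Ω → ℝ≥0∞) :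
    ∫⁻ ω in B, f ω ∂P = ∑' n, ∫⁻ ω in B ∩ {ω | Y ω = n}, f ω ∂P := by
  have hBu : B = ⋃ n, B ∩ {ω | Y ω = n} := by
    ext ω; simp only [Set.mem_iUnion, Set.mem_inter_iff, Set.mem_setOf_eq]
    exact ⟨fun h => ⟨Y ω, h, rfl⟩, fun h => h.choose_spec.1⟩
  have hmeas : ∀ n, MeasurableSet (B ∩ {ω | Y ω = n}) :=
    fun n => hB.inter (hY (measurableSet_singleton n))
  have hdisj : Pairwise (Function.onFun Disjoint fun n => B ∩ {ω | Y ω = n}) := by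
    intro a b hab
    simp only [Function.onFun, Set.disjoint_left]
    rintro ω ⟨-, h1⟩ ⟨-, h2⟩
    have h1' : Y ω = a := h1
    have h2' : Y ω = b := h2
    exact hab (h1' ▸ h2'.symm ▸ rfl)
  nth_rewrite 1 [hBu]
  exact lintegral_iUnion hmeas hdisj _

lemma step_split (hC : IsBDChain P X k l r) (m n : ℕ) (hn : 1 ≤ n) {A : Set Ω}
    (hA : MeasurableSet[natFilt X m] A) :
    P ((A ∩ {ω | X m ω = n}) ∩ {ω | X (m+1) ω = n+1})
        = ENNReal.ofReal (r n) * P (A ∩ {ω | X m ω = n}) ∧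
    P ((A ∩ {ω | X m ω = n}) ∩ {ω | X (m+1) ω = n-1})
        = ENNReal.ofReal (l n) * P (A ∩ {ω | X m ω = n}) ∧
    P ((A ∩ {ω | X m ω = n}) \ ({ω | X (m+1) ω = n+1} ∪ {ω | X (m+1) ω = n-1})) = 0 := by
  haveI := hC.isProb
  have hu := hC.step_up m n hn A hA
  have hd := hC.step_down m n hn A hA
  have e0 : A ∩ {ω | X m ω = n ∧ X (m+1) ω = n+1}
      = (A ∩ {ω | X m ω = n}) ∩ {ω | X (m+1) ω = n+1} := by
    ext ω; simp only [Set.mem_inter_iff, Set.mem_setOf_eq]; tauto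
  have e1 : A ∩ {ω | X m ω = n ∧ X (m+1) ω = n-1}
      = (A ∩ {ω | X m ω = n}) ∩ {ω | X (m+1) ω = n-1} := by
    ext ω; simp only [Set.mem_inter_iff, Set.mem_setOf_eq]; tauto
  rw [e0] at hu
  rw [e1] at hd
  refine ⟨hu, hd, ?_⟩
  apply null_of_add (by simp)
    ((natFilt_le hC.meas m A hA).inter (natFilt_le hC.meas m _ (measurableSet_X_eq (le_refl m))))
    (hC.meas (m+1) (MeasurableSet.singleton (n+1)))
    (hC.meas (m+1) (MeasurableSet.singleton (n-1)))
  · rw [Set.disjoint_left]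
    intro ω h1 h2
    have h1' : X (m+1) ω = n + 1 := h1
    have h2' : X (m+1) ω = n - 1 := h2
    omega
  · show P ((A ∩ {ω | X m ω = n}) ∩ {ω | X (m+1) ω = n+1})
        + P ((A ∩ {ω | X m ω = n}) ∩ {ω | X (m+1) ω = n-1}) = P (A ∩ {ω | X m ω = n})
    rw [hu, hd, ← add_mul]
    have : ENNReal.ofReal (r n) + ENNReal.ofReal (l n) = 1 := by
      rw [← ENNReal.ofReal_add (le_of_lt (hC.r_pos n hn)) (le_of_lt (hC.l_pos n hn))]
      rw [show r n + l n = 1 by linarith [hC.lr_one n hn]]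
      exact ENNReal.ofReal_one
    rw [this, one_mul]

lemma one_step (hC : IsBDChain P X k l r) (g : ℕ → ℝ) (e : ℕ → ℝ≥0∞)
    (he0 : e 0 = 0)
    (hharm : ∀ n, 1 ≤ n → ENNReal.ofReal (r n) * ENNReal.ofReal (g (n+1))
        + ENNReal.ofReal (l n) * ENNReal.ofReal (g (n-1)) + e n = ENNReal.ofReal (g n))
    (m : ℕ) {A : Set Ω} (hA : MeasurableSet[natFilt X m] A) :
    ∫⁻ ω in A, (ENNReal.ofReal (g (X (m+1) ω)) + e (X m ω)) ∂P
      = ∫⁻ ω in A, ENNReal.ofReal (g (X m ω)) ∂P := by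
  haveI := hC.isProb
  have hA' : MeasurableSet A := natFilt_le hC.meas m A hA
  have hmf1 : Measurable fun ω => ENNReal.ofReal (g (X (m+1) ω)) :=
    (measurable_from_top (f := fun n : ℕ => ENNReal.ofReal (g n))).comp (hC.meas (m+1))
  rw [lint_piece P hA' (hC.meas m), lint_piece P hA' (hC.meas m)
    (fun ω => ENNReal.ofReal (g (X m ω)))]
  refine tsum_congr fun n => ?_
  set An := A ∩ {ω | X m ω = n} with hAn
  have hAnm : MeasurableSet An := hA'.inter (hC.meas m (measurableSet_singleton n))
  have hRHS : ∫⁻ ω in An, ENNReal.ofReal (g (X m ω)) ∂P = ENNReal.ofReal (g n) * P An := by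
    rw [setLIntegral_congr_fun_ae hAnm (Filter.Eventually.of_forall fun ω hω => ?_),
      setLIntegral_const]
    have : X m ω = n := hω.2
    rw [this]
  rw [hRHS]
  rcases Nat.eq_zero_or_pos n with hn | hn
  · subst hn
    rw [setLIntegral_congr_fun_ae hAnm ?_, setLIntegral_const]
    filter_upwards [hC.absorb] with ω habs hω
    have h0 : X m ω = 0 := hω.2
    rw [habs m h0, h0, he0, add_zero]
  · -- n ≥ 1
    obtain ⟨hu, hd, hnull⟩ := step_split hC m n hn hA
    rw [lintegral_add_left hmf1]
    have he : ∫⁻ ω in An, e (X m ω) ∂P = e n * P An := by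
      rw [setLIntegral_congr_fun_ae hAnm (Filter.Eventually.of_forall fun ω hω => ?_),
        setLIntegral_const]
      have : X m ω = n := hω.2
      rw [this]
    have hf1 : ∫⁻ ω in An, ENNReal.ofReal (g (X (m+1) ω)) ∂P
        = ENNReal.ofReal (g (n+1)) * (ENNReal.ofReal (r n) * P An)
          + ENNReal.ofReal (g (n-1)) * (ENNReal.ofReal (l n) * P An) := by
      rw [lint_decomp P hAnm (hC.meas (m+1)) (fun q => ENNReal.ofReal (g q))]
      rw [tsum_eq_sum (s := {n-1, n+1}) ?_]
      · rw [Finset.sum_pair (by omega)]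
        rw [hu, hd]
        ring
      · intro q hq
        simp only [Finset.mem_insert, Finset.mem_singleton] at hq
        push_neg at hq
        have hsub : An ∩ {ω | X (m+1) ω = q}
            ⊆ An \ ({ω | X (m+1) ω = n+1} ∪ {ω | X (m+1) ω = n-1}) := by
          rintro ω ⟨h1, h2⟩
          have h2' : X (m+1) ω = q := h2
          refine ⟨h1, ?_⟩
          rintro (h3 | h3)
          · have h3' : X (m+1) ω = n+1 := h3; omega
          · have h3' : X (m+1) ω = n-1 := h3; omega
        rw [measure_mono_null hsub hnull, mul_zero]
    rw [hf1, he]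
    calc ENNReal.ofReal (g (n+1)) * (ENNReal.ofReal (r n) * P An)
          + ENNReal.ofReal (g (n-1)) * (ENNReal.ofReal (l n) * P An) + e n * P An
        = (ENNReal.ofReal (r n) * ENNReal.ofReal (g (n+1))
            + ENNReal.ofReal (l n) * ENNReal.ofReal (g (n-1)) + e n) * P An := by ring
      _ = ENNReal.ofReal (g n) * P An := by rw [hharm n hn]

end onestep

section ost
variable {Ω : Type*} [MeasurableSpace Ω] {P : Measure Ω} {X : ℕ → Ω → ℕ} {k : ℕ}

lemma ost_trunc (hC : IsBDChain P X k l r) (g : ℕ → ℝ) (e : ℕ → ℝ≥0∞)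
    (he0 : e 0 = 0)
    (hharm : ∀ n, 1 ≤ n → ENNReal.ofReal (r n) * ENNReal.ofReal (g (n+1))
        + ENNReal.ofReal (l n) * ENNReal.ofReal (g (n-1)) + e n = ENNReal.ofReal (g n))
    {T : Ω → ℕ} (hT : IsBDStop X T) :
    ∀ m, ∫⁻ ω, (ENNReal.ofReal (g (X (min (T ω) m) ω))
        + ∑ i ∈ Finset.range (min (T ω) m), e (X i ω)) ∂P = ENNReal.ofReal (g k) := by
  haveI := hC.isProb
  intro m
  induction m with
  | zero =>
      have : ∀ᵐ ω ∂P, (ENNReal.ofReal (g (X (min (T ω) 0) ω))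
          + ∑ i ∈ Finset.range (min (T ω) 0), e (X i ω)) = ENNReal.ofReal (g k) := by
        filter_upwards [hC.init] with ω h0
        simp [h0]
      rw [lintegral_congr_ae this, lintegral_const, measure_univ, mul_one]
  | succ m ih =>
      set s : Set Ω := {ω | T ω ≤ m} with hs_def
      have hsc : sᶜ = {ω | m < T ω} := by ext ω; simp [hs_def]
      have hscF : MeasurableSet[natFilt X m] sᶜ := by rw [hsc]; exact stop_gt_meas hT m
      have hs : MeasurableSet s := by
        have := natFilt_le hC.meas m _ hscF
        simpa using this.compl
      have hsum_meas : Measurable fun ω => ∑ i ∈ Finset.range m, e (X i ω) :=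
        Finset.measurable_sum _ fun i _ =>
          (measurable_from_top (f := e)).comp (hC.meas i)
      rw [← lintegral_add_compl (μ := P) _ hs]
      rw [← lintegral_add_compl (μ := P)
        (fun ω => ENNReal.ofReal (g (X (min (T ω) m) ω))
          + ∑ i ∈ Finset.range (min (T ω) m), e (X i ω)) hs] at ih
      have hpart1 : ∫⁻ ω in s, (ENNReal.ofReal (g (X (min (T ω) (m+1)) ω))
          + ∑ i ∈ Finset.range (min (T ω) (m+1)), e (X i ω)) ∂P
          = ∫⁻ ω in s, (ENNReal.ofReal (g (X (min (T ω) m) ω))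
          + ∑ i ∈ Finset.range (min (T ω) m), e (X i ω)) ∂P := by
        apply setLIntegral_congr_fun_ae hs
        apply Filter.Eventually.of_forall
        intro ω hω
        have hTm : T ω ≤ m := hω
        have e1 : min (T ω) (m+1) = min (T ω) m := by omega
        rw [e1]
      have hpart2 : ∫⁻ ω in sᶜ, (ENNReal.ofReal (g (X (min (T ω) (m+1)) ω))
          + ∑ i ∈ Finset.range (min (T ω) (m+1)), e (X i ω)) ∂P
          = ∫⁻ ω in sᶜ, (ENNReal.ofReal (g (X (min (T ω) m) ω))
          + ∑ i ∈ Finset.range (min (T ω) m), e (X i ω)) ∂P := by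
        have c1 : ∫⁻ ω in sᶜ, (ENNReal.ofReal (g (X (min (T ω) (m+1)) ω))
            + ∑ i ∈ Finset.range (min (T ω) (m+1)), e (X i ω)) ∂P
            = ∫⁻ ω in sᶜ, ((ENNReal.ofReal (g (X (m+1) ω)) + e (X m ω))
            + ∑ i ∈ Finset.range m, e (X i ω)) ∂P := by
          apply setLIntegral_congr_fun_ae hs.compl
          apply Filter.Eventually.of_forall
          intro ω hω
          have hTm : m < T ω := by rw [hsc] at hω; exact hω
          have e1 : min (T ω) (m+1) = m+1 := by omega
          rw [e1, Finset.sum_range_succ]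
          ring
        have c2 : ∫⁻ ω in sᶜ, (ENNReal.ofReal (g (X (min (T ω) m) ω))
            + ∑ i ∈ Finset.range (min (T ω) m), e (X i ω)) ∂P
            = ∫⁻ ω in sᶜ, (ENNReal.ofReal (g (X m ω))
            + ∑ i ∈ Finset.range m, e (X i ω)) ∂P := by
          apply setLIntegral_congr_fun_ae hs.compl
          apply Filter.Eventually.of_forall
          intro ω hω
          have hTm : m < T ω := by rw [hsc] at hω; exact hω
          have e1 : min (T ω) m = m := by omega
          rw [e1]
        rw [c1, c2]
        rw [lintegral_add_right _ hsum_meas, lintegral_add_right _ hsum_meas]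
        congr 1
        exact one_step hC g e he0 hharm m hscF
      rw [hpart1, hpart2]
      exact ih
end ost

section cor
variable {Ω : Type*} [MeasurableSpace Ω] {P : Measure Ω} {X : ℕ → Ω → ℕ} {k : ℕ}

lemma harm_ofReal (hl : ∀ n, 1 ≤ n → 0 < l n) (hr : ∀ n, 1 ≤ n → 0 < r n)
    {g eR : ℕ → ℝ} (hgnn : ∀ n, 0 ≤ g n) (henn : ∀ n, 0 ≤ eR n)
    (h : ∀ n, 1 ≤ n → r n * g (n+1) + l n * g (n-1) + eR n = g n) :
    ∀ n, 1 ≤ n → ENNReal.ofReal (r n) * ENNReal.ofReal (g (n+1))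
      + ENNReal.ofReal (l n) * ENNReal.ofReal (g (n-1)) + ENNReal.ofReal (eR n)
      = ENNReal.ofReal (g n) := by
  intro n hn
  rw [← ENNReal.ofReal_mul (le_of_lt (hr n hn)), ← ENNReal.ofReal_mul (le_of_lt (hl n hn)),
    ← ENNReal.ofReal_add (mul_nonneg (le_of_lt (hr n hn)) (hgnn _))
      (mul_nonneg (le_of_lt (hl n hn)) (hgnn _)),
    ← ENNReal.ofReal_add (add_nonneg (mul_nonneg (le_of_lt (hr n hn)) (hgnn _))
      (mul_nonneg (le_of_lt (hl n hn)) (hgnn _))) (henn n), h n hn]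

lemma ost_x (hC : IsBDChain P X k l r) (htlim : Tendsto (tp l r) atTop (nhds 0))
    {T : Ω → ℕ} (hT : IsBDStop X T) (hTint : ∫⁻ ω, (T ω : ℝ≥0∞) ∂P < ⊤) :
    ∫⁻ ω, ENNReal.ofReal (xp l r (X (T ω) ω)) ∂P = ENNReal.ofReal (xp l r k) := by
  haveI := hC.isProb
  have hl := hC.l_pos
  have hr := hC.r_pos
  have hTmeas : Measurable T := stop_measurable hC.meas hT
  -- a uniform bound on tp
  obtain ⟨C0, hC0⟩ := htlim.bddAbove_range
  set Ct : ℝ := max C0 1 with hCt_def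
  have hCt1 : 1 ≤ Ct := le_max_right _ _
  have hCt0 : 0 ≤ Ct := by linarith
  have htp_le : ∀ n, tp l r n ≤ Ct := fun n =>
    le_trans (hC0 (Set.mem_range_self n)) (le_max_left _ _)
  -- pathwise bound
  have hpath : ∀ᵐ ω ∂P, ∀ j, xp l r (X j ω) ≤ xp l r k + Ct * j := by
    filter_upwards [ae_steps hC, hC.init] with ω hst h0
    intro j
    induction j with
    | zero => simp [h0]
    | succ j ihj =>
        rcases Nat.eq_zero_or_pos (X j ω) with hz | hp
        · rw [(hst j).1 hz]
          rw [xp_zero]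
          have : (0:ℝ) ≤ (j:ℝ) + 1 := by positivity
          nlinarith [xp_nonneg hl hr k]
        · rcases (hst j).2 hp with hup | hdn
          · rw [hup, xp_succ]
            push_cast
            nlinarith [htp_le (X j ω)]
          · rw [hdn]
            have : xp l r (X j ω - 1) ≤ xp l r (X j ω) := xp_mono hl hr (by omega)
            push_cast
            nlinarith
  -- dominated convergence
  set F : ℕ → Ω → ℝ≥0∞ := fun m ω => ENNReal.ofReal (xp l r (X (min (T ω) m) ω)) with hF
  have hFmeas : ∀ m, Measurable (F m) := by
    intro m
    exact meas_pair (hTmeas.min measurable_const)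
      (fun j => (measurable_from_top (f := fun n : ℕ => ENNReal.ofReal (xp l r n))).comp
        (hC.meas j))
  set bound : Ω → ℝ≥0∞ := fun ω => ENNReal.ofReal (xp l r k)
      + ENNReal.ofReal Ct * (T ω : ℝ≥0∞) with hbound_def
  have hbound : ∀ m, F m ≤ᵐ[P] bound := by
    intro m
    filter_upwards [hpath] with ω hω
    have h1 : xp l r (X (min (T ω) m) ω) ≤ xp l r k + Ct * (min (T ω) m) := hω _
    have h2 : xp l r (X (min (T ω) m) ω) ≤ xp l r k + Ct * (T ω) := by
      have hmin : ((min (T ω) m : ℕ) : ℝ) ≤ ((T ω : ℕ) : ℝ) :=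
        Nat.cast_le.mpr (Nat.min_le_left _ _)
      nlinarith [mul_le_mul_of_nonneg_left hmin hCt0]
    calc F m ω ≤ ENNReal.ofReal (xp l r k + Ct * (T ω)) := ENNReal.ofReal_le_ofReal h2
      _ = bound ω := by
          rw [ENNReal.ofReal_add (xp_nonneg hl hr k) (by positivity),
            ENNReal.ofReal_mul hCt0, ENNReal.ofReal_natCast]
  have hbound_int : ∫⁻ ω, bound ω ∂P < ⊤ := by
    rw [hbound_def]
    simp only
    have hTcast : Measurable fun ω => ((T ω : ℕ) : ℝ≥0∞) := by
      exact (measurable_from_top (f := fun n : ℕ => (n : ℝ≥0∞))).comp hTmeas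
    rw [lintegral_add_left measurable_const, lintegral_const_mul _ hTcast]
    rw [lintegral_const, measure_univ, mul_one]
    exact ENNReal.add_lt_top.mpr ⟨ENNReal.ofReal_lt_top,
      ENNReal.mul_lt_top ENNReal.ofReal_lt_top hTint⟩
  have hptconv : ∀ᵐ ω ∂P, Tendsto (fun m => F m ω) atTop
      (𝓝 (ENNReal.ofReal (xp l r (X (T ω) ω)))) := by
    filter_upwards with ω
    apply tendsto_const_nhds.congr'
    filter_upwards [eventually_ge_atTop (T ω)] with m hm
    rw [hF]
    simp only
    rw [min_eq_left hm]
  have hdct := tendsto_lintegral_of_dominated_convergence bound hFmeas hbound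
    (ne_of_lt hbound_int) hptconv
  -- each truncated integral is constant
  have hconst : ∀ m, ∫⁻ ω, F m ω ∂P = ENNReal.ofReal (xp l r k) := by
    intro m
    have := ost_trunc hC (xp l r) (fun _ => 0) rfl ?harm hT m
    · rw [← this]
      apply lintegral_congr
      intro ω
      simp [hF]
    · intro n hn
      have := harm_ofReal hl hr (g := xp l r) (eR := fun _ => 0)
        (xp_nonneg hl hr) (fun _ => le_refl 0) ?_ n hn
      · simpa using this
      · intro n' hn'
        simpa using xp_harm hl hr hC.lr_one n' hn'
  have : Tendsto (fun _ : ℕ => ENNReal.ofReal (xp l r k)) atTop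
      (𝓝 (∫⁻ ω, ENNReal.ofReal (xp l r (X (T ω) ω)) ∂P)) := by
    apply hdct.congr
    intro m
    rw [hconst m]
  exact (tendsto_nhds_unique this tendsto_const_nhds)

end cor

section countb
variable {Ω : Type*} [MeasurableSpace Ω] {P : Measure Ω} {X : ℕ → Ω → ℕ} {k : ℕ}

/-- expected (weighted) number of visits to `j` before a stopping time is bounded. -/
lemma count_bound (hC : IsBDChain P X k l r) (j : ℕ) (hj : 1 ≤ j)
    {T : Ω → ℕ} (hT : IsBDStop X T) :
    ∫⁻ ω, (∑ i ∈ Finset.range (T ω),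
        (if X i ω = j then ENNReal.ofReal (l j * tp l r (j-1)) else 0)) ∂P
      ≤ ENNReal.ofReal (xp l r j) := by
  haveI := hC.isProb
  have hl := hC.l_pos
  have hr := hC.r_pos
  set eE : ℕ → ℝ≥0∞ := fun n => if n = j then ENNReal.ofReal (l j * tp l r (j-1)) else 0
    with heE
  have he0 : eE 0 = 0 := by rw [heE]; simp only; rw [if_neg (by omega)]
  have hharm : ∀ n, 1 ≤ n → ENNReal.ofReal (r n) * ENNReal.ofReal (gj l r j (n+1))
      + ENNReal.ofReal (l n) * ENNReal.ofReal (gj l r j (n-1)) + eE n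
      = ENNReal.ofReal (gj l r j n) := by
    intro n hn
    have := harm_ofReal hl hr (g := gj l r j)
      (eR := fun n => if n = j then l j * tp l r (j-1) else 0)
      (gj_nonneg hl hr j) ?_ (gj_harm hl hr hC.lr_one j hj) n hn
    · rw [← this]
      congr 1
      rw [heE]
      simp only
      split <;> simp
    · intro n'
      show (0:ℝ) ≤ if n' = j then l j * tp l r (j-1) else 0
      split
      · exact mul_nonneg (le_of_lt (hl j hj)) (le_of_lt (tp_pos hl hr _))
      · exact le_refl 0
  have hkey := ost_trunc hC (gj l r j) eE he0 hharm hT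
  have hbound : ∀ m, ∫⁻ ω, (∑ i ∈ Finset.range (min (T ω) m), eE (X i ω)) ∂P
      ≤ ENNReal.ofReal (xp l r j) := by
    intro m
    calc ∫⁻ ω, (∑ i ∈ Finset.range (min (T ω) m), eE (X i ω)) ∂P
        ≤ ∫⁻ ω, (ENNReal.ofReal (gj l r j (X (min (T ω) m) ω))
            + ∑ i ∈ Finset.range (min (T ω) m), eE (X i ω)) ∂P :=
          lintegral_mono fun ω => le_add_self
      _ = ENNReal.ofReal (gj l r j k) := hkey m
      _ ≤ ENNReal.ofReal (xp l r j) := ENNReal.ofReal_le_ofReal (gj_le hl hr j k)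
  -- monotone convergence in m
  have hTmeas : Measurable T := stop_measurable hC.meas hT
  set S : ℕ → Ω → ℝ≥0∞ := fun m ω => ∑ i ∈ Finset.range (min (T ω) m), eE (X i ω) with hS
  have hSmeas : ∀ m, Measurable (S m) := by
    intro m
    apply meas_pair (hTmeas.min measurable_const)
      (H := fun p ω => ∑ i ∈ Finset.range p, eE (X i ω))
    intro p
    exact Finset.measurable_sum _ fun i _ =>
      (measurable_from_top (f := eE)).comp (hC.meas i)
  have hSmono : Monotone S := by
    intro a b hab ω
    apply Finset.sum_le_sum_of_subset
    apply Finset.range_subset_range.mpr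
    omega
  have hSsup : ∀ ω, (⨆ m, S m ω) = ∑ i ∈ Finset.range (T ω), eE (X i ω) := by
    intro ω
    apply le_antisymm
    · apply iSup_le
      intro m
      apply Finset.sum_le_sum_of_subset
      apply Finset.range_subset_range.mpr
      omega
    · have : S (T ω) ω = ∑ i ∈ Finset.range (T ω), eE (X i ω) := by
        rw [hS]; simp
      rw [← this]
      exact le_iSup (fun m => S m ω) (T ω)
  calc ∫⁻ ω, (∑ i ∈ Finset.range (T ω), eE (X i ω)) ∂P
      = ∫⁻ ω, ⨆ m, S m ω ∂P := by
        apply lintegral_congr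
        intro ω
        rw [hSsup ω]
    _ = ⨆ m, ∫⁻ ω, S m ω ∂P := lintegral_iSup hSmeas (fun a b hab ω => hSmono hab ω)
    _ ≤ ENNReal.ofReal (xp l r j) := iSup_le hbound

end countb

section aecount
variable {Ω : Type*} [MeasurableSpace Ω] {P : Measure Ω} {X : ℕ → Ω → ℕ} {k : ℕ}

lemma ae_counts (hC : IsBDChain P X k l r) (T : ℕ → Ω → ℕ) (hstop : ∀ m, IsBDStop X (T m))
    (hmono : ∀ ω, Monotone fun m => T m ω) :
    ∀ᵐ ω ∂P, ∀ j, 1 ≤ j → ∃ K : ℕ, ∀ m,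
      ((Finset.range (T m ω)).filter fun i => X i ω = j).card ≤ K := by
  haveI := hC.isProb
  have hl := hC.l_pos
  have hr := hC.r_pos
  rw [ae_all_iff]
  intro j
  by_cases hj : 1 ≤ j
  swap
  · filter_upwards with ω h; omega
  set d : ℝ≥0∞ := ENNReal.ofReal (l j * tp l r (j-1)) with hd
  have hdpos : 0 < d := ENNReal.ofReal_pos.mpr
    (mul_pos (hl j hj) (tp_pos hl hr _))
  have hdtop : d ≠ ⊤ := ENNReal.ofReal_lt_top.ne
  set eE : ℕ → ℝ≥0∞ := fun n => if n = j then d else 0 with heE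
  set S : ℕ → Ω → ℝ≥0∞ := fun m ω => ∑ i ∈ Finset.range (T m ω), eE (X i ω) with hS
  have hSmeas : ∀ m, Measurable (S m) := by
    intro m
    apply meas_pair (stop_measurable hC.meas (hstop m))
      (H := fun p ω => ∑ i ∈ Finset.range p, eE (X i ω))
    intro p
    exact Finset.measurable_sum _ fun i _ =>
      (measurable_from_top (f := eE)).comp (hC.meas i)
  have hSmono : ∀ ω, Monotone fun m => S m ω := by
    intro ω a b hab
    apply Finset.sum_le_sum_of_subset
    exact Finset.range_subset_range.mpr (hmono ω hab)
  have hGint : ∫⁻ ω, (⨆ m, S m ω) ∂P ≤ ENNReal.ofReal (xp l r j) := by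
    rw [lintegral_iSup hSmeas (fun a b hab ω => hSmono ω hab)]
    exact iSup_le fun m => count_bound hC j hj (hstop m)
  have hae : ∀ᵐ ω ∂P, (⨆ m, S m ω) < ⊤ := by
    apply ae_lt_top (Measurable.iSup hSmeas)
    exact (lt_of_le_of_lt hGint ENNReal.ofReal_lt_top).ne
  filter_upwards [hae] with ω hω _
  have hdiv : (⨆ m, S m ω) / d ≠ ⊤ := (ENNReal.div_lt_top hω.ne hdpos.ne').ne
  obtain ⟨K, hK⟩ := ENNReal.exists_nat_gt hdiv
  refine ⟨K, fun m => ?_⟩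
  have hcard : S m ω = (((Finset.range (T m ω)).filter fun i => X i ω = j).card : ℝ≥0∞) * d := by
    rw [hS]
    simp only
    rw [← Finset.sum_filter]
    rw [Finset.sum_const, nsmul_eq_mul]
  have h1 : (((Finset.range (T m ω)).filter fun i => X i ω = j).card : ℝ≥0∞) * d
      ≤ ⨆ m, S m ω := by
    rw [← hcard]
    exact le_iSup (fun m => S m ω) m
  have h2 : (((Finset.range (T m ω)).filter fun i => X i ω = j).card : ℝ≥0∞) < (K : ℝ≥0∞) :=
    lt_of_le_of_lt ((ENNReal.le_div_iff_mul_le (Or.inl hdpos.ne') (Or.inl hdtop)).mpr h1) hK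
  exact_mod_cast h2.le

end aecount

section paths
variable {Ω : Type*} [MeasurableSpace Ω] {P : Measure Ω} {X : ℕ → Ω → ℕ} {k : ℕ}

lemma hit0_finite_imp {ω : Ω} {j : ℕ} (h : hit0 X ω = (j : ℕ∞)) : X j ω = 0 := by
  rw [hit0, hitTime] at h
  set Sn : Set ℕ := {m | X m ω ∈ ({0} : Set ℕ)} with hSn
  have hne : Sn.Nonempty := by
    by_contra hc
    rw [Set.not_nonempty_iff_eq_empty] at hc
    rw [hc] at h
    simp at h
  have hmem : sInf Sn ∈ Sn := Nat.sInf_mem hne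
  have heq : sInf ((fun m : ℕ => (m : ℕ∞)) '' Sn) = ((sInf Sn : ℕ) : ℕ∞) := by
    apply le_antisymm
    · exact sInf_le ⟨sInf Sn, hmem, rfl⟩
    · apply le_sInf
      rintro b ⟨m, hm, rfl⟩
      change ((sInf Sn : ℕ) : ℕ∞) ≤ (m : ℕ∞)
      exact_mod_cast Nat.sInf_le hm
  rw [heq] at h
  have : j = sInf Sn := by exact_mod_cast h.symm
  rw [this]
  exact hmem

lemma hit0_top_imp {ω : Ω} (h : hit0 X ω = ⊤) (n : ℕ) : X n ω ≠ 0 := by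
  intro hc
  have : ((n : ℕ∞)) ∈ ((fun m : ℕ => (m : ℕ∞)) '' {m | X m ω ∈ ({0} : Set ℕ)}) :=
    ⟨n, by simpa using hc, rfl⟩
  have h2 : hit0 X ω ≤ (n : ℕ∞) := sInf_le this
  rw [h] at h2
  exact ENat.coe_ne_top n (top_le_iff.mp h2)

lemma enat_tendsto_coe {f : ℕ → ℕ} {j : ℕ}
    (h : Tendsto (fun m => (f m : ℕ∞)) atTop (𝓝 (j : ℕ∞))) :
    ∀ᶠ m in atTop, f m = j := by
  have h1 : ∀ᶠ m in atTop, (f m : ℕ∞) < ((j + 1 : ℕ) : ℕ∞) := by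
    apply h.eventually (Iio_mem_nhds ?_)
    exact_mod_cast Nat.lt_succ_self j
  have h2 : ∀ᶠ m in atTop, j ≤ f m := by
    rcases Nat.eq_zero_or_pos j with hj | hj
    · filter_upwards with m; omega
    · have : ∀ᶠ m in atTop, ((j - 1 : ℕ) : ℕ∞) < (f m : ℕ∞) := by
        apply h.eventually (Ioi_mem_nhds ?_)
        exact_mod_cast Nat.sub_lt hj Nat.one_pos
      filter_upwards [this] with m hm
      have : (j - 1 : ℕ) < f m := by exact_mod_cast hm
      omega
  filter_upwards [h1, h2] with m hm1 hm2
  have : f m < j + 1 := by exact_mod_cast hm1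
  omega

lemma enat_tendsto_top {f : ℕ → ℕ}
    (h : Tendsto (fun m => (f m : ℕ∞)) atTop (𝓝 (⊤ : ℕ∞))) :
    Tendsto f atTop atTop := by
  rw [tendsto_atTop]
  intro b
  have : ∀ᶠ m in atTop, ((b : ℕ) : ℕ∞) < (f m : ℕ∞) := by
    apply h.eventually (Ioi_mem_nhds ?_)
    exact lt_top_iff_ne_top.mpr (ENat.coe_ne_top b)
  filter_upwards [this] with m hm
  have : b < f m := by exact_mod_cast hm
  omega

lemma card_filter_unbounded {p : ℕ → Prop} [DecidablePred p] (h : ∀ M, ∃ n, M ≤ n ∧ p n) (c : ℕ) :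
    ∃ M, c ≤ ((Finset.range M).filter p).card := by
  induction c with
  | zero => exact ⟨0, Nat.zero_le _⟩
  | succ c ih =>
      obtain ⟨M, hM⟩ := ih
      obtain ⟨n, hnM, hpn⟩ := h M
      refine ⟨n + 1, ?_⟩
      have hsub : (Finset.range M).filter p ⊆ (Finset.range (n+1)).filter p :=
        Finset.filter_subset_filter _ (Finset.range_subset_range.mpr (by omega))
      have hmem : n ∈ (Finset.range (n+1)).filter p := by
        simp only [Finset.mem_filter, Finset.mem_range]
        exact ⟨by omega, hpn⟩
      have hnot : n ∉ (Finset.range M).filter p := by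
        simp only [Finset.mem_filter, Finset.mem_range]
        intro h'
        omega
      have := Finset.card_lt_card ((Finset.ssubset_iff_of_subset hsub).mpr ⟨n, hmem, hnot⟩)
      omega

lemma ae_eventually_out (hC : IsBDChain P X k l r) (T : ℕ → Ω → ℕ)
    (hstop : ∀ m, IsBDStop X (T m)) (hmono : ∀ ω, Monotone fun m => T m ω)
    (hconv : ∀ᵐ ω ∂P, Tendsto (fun m => (T m ω : ℕ∞)) atTop (nhds (hit0 X ω))) (N : ℕ) :
    ∀ᵐ ω ∂P, ∀ᶠ m in atTop, ¬(1 ≤ X (T m ω) ω ∧ X (T m ω) ω ≤ N) := by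
  filter_upwards [ae_counts hC T hstop hmono, hconv] with ω hcount hT
  cases hhit : hit0 X ω with
  | coe j =>
      rw [hhit] at hT
      have hev : ∀ᶠ m in atTop, T m ω = j := enat_tendsto_coe hT
      have hXj : X j ω = 0 := hit0_finite_imp hhit
      filter_upwards [hev] with m hm
      rw [hm, hXj]
      omega
  | top =>
      rw [hhit] at hT
      have hne := hit0_top_imp hhit
      have htop : Tendsto (fun m => T m ω) atTop atTop := enat_tendsto_top hT
      have hEj : ∀ j ∈ Finset.Icc 1 N, ∀ᶠ n in atTop, X n ω ≠ j := by
        intro j hj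
        rw [Finset.mem_Icc] at hj
        obtain ⟨K, hK⟩ := hcount j hj.1
        rw [eventually_atTop]
        by_contra hc
        push_neg at hc
        have hfreq : ∀ M, ∃ n, M ≤ n ∧ X n ω = j := by
          intro M
          obtain ⟨n, hn1, hn2⟩ := hc M
          exact ⟨n, hn1, by simpa using hn2⟩
        obtain ⟨M, hM⟩ := card_filter_unbounded (p := fun i => X i ω = j) hfreq (K + 1)
        obtain ⟨m, hm⟩ := (tendsto_atTop.mp htop M).exists
        have hsub : (Finset.range M).filter (fun i => X i ω = j)
            ⊆ (Finset.range (T m ω)).filter (fun i => X i ω = j) :=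
          Finset.filter_subset_filter _ (Finset.range_subset_range.mpr hm)
        have hc1 := Finset.card_le_card hsub
        have hc2 := hK m
        omega
      have hall : ∀ᶠ n in atTop, ∀ j ∈ Finset.Icc 1 N, X n ω ≠ j :=
        (Finset.Icc 1 N).eventually_all.mpr hEj
      have hout : ∀ᶠ n in atTop, ¬(1 ≤ X n ω ∧ X n ω ≤ N) := by
        filter_upwards [hall] with n hn
        rintro ⟨h1, h2⟩
        exact hn (X n ω) (Finset.mem_Icc.mpr ⟨h1, h2⟩) rfl
      exact htop.eventually hout

end paths

section cesaro
variable {l r : ℕ → ℝ}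

lemma one_le_xp (hl : ∀ n, 1 ≤ n → 0 < l n) (hr : ∀ n, 1 ≤ n → 0 < r n)
    {k : ℕ} (hk : 1 ≤ k) : 1 ≤ xp l r k := by
  have h0 : (0:ℕ) ∈ Finset.range k := Finset.mem_range.mpr (by omega)
  have := Finset.single_le_sum (f := tp l r)
    (fun i _ => le_of_lt (tp_pos hl hr i)) h0
  rw [tp_zero] at this
  exact this

lemma xp_linear_bound (hl : ∀ n, 1 ≤ n → 0 < l n) (hr : ∀ n, 1 ≤ n → 0 < r n)
    (htlim : Tendsto (tp l r) atTop (nhds 0)) {δ : ℝ} (hδ : 0 < δ) :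
    ∃ N : ℕ, 1 ≤ N ∧ ∀ n, N < n → xp l r n ≤ 2 * δ * n := by
  have hev : ∀ᶠ i in atTop, tp l r i < δ := htlim.eventually_lt_const hδ
  obtain ⟨N0, hN0⟩ := eventually_atTop.mp hev
  obtain ⟨M, hM⟩ := exists_nat_gt (xp l r N0 / δ)
  refine ⟨max N0 M + 1, by omega, fun n hn => ?_⟩
  have hN0n : N0 ≤ n := by omega
  have hsplit : xp l r n = xp l r N0 + ∑ i ∈ Finset.Ico N0 n, tp l r i := by
    simp only [xp, Finset.range_eq_Ico]
    exact (Finset.sum_Ico_consecutive _ (Nat.zero_le N0) hN0n).symm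
  have hsum : ∑ i ∈ Finset.Ico N0 n, tp l r i ≤ (n - N0 : ℕ) * δ := by
    have := Finset.sum_le_card_nsmul (Finset.Ico N0 n) (tp l r) δ
      (fun i hi => le_of_lt (hN0 i (Finset.mem_Ico.mp hi).1))
    rw [Nat.card_Ico] at this
    simpa [nsmul_eq_mul] using this
  have h1 : ((n - N0 : ℕ) : ℝ) ≤ (n : ℝ) := by
    exact_mod_cast Nat.sub_le n N0
  have h2 : xp l r N0 < δ * M := by
    rw [div_lt_iff₀ hδ] at hM
    linarith
  have h3 : (M : ℝ) ≤ (n : ℝ) := by exact_mod_cast (by omega : M ≤ n)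
  have h4 : (n - N0 : ℕ) * δ ≤ (n:ℝ) * δ := by nlinarith
  nlinarith

end cesaro

/-- If `t_n → 0`, then for any non-decreasing sequence of stopping
times `T_m` with `E[T_m] < ∞` and `T_m → T_∂` a.s., `E[X_{T_m}] → +∞`. -/
theorem stmt2 {Ω : Type*} [MeasurableSpace Ω] (P : Measure Ω) (X : ℕ → Ω → ℕ)
    (k : ℕ) (l r : ℕ → ℝ) (hC : IsBDChain P X k l r)
    (htlim : Tendsto (tp l r) atTop (nhds 0))
    (T : ℕ → Ω → ℕ) (hstop : ∀ m, IsBDStop X (T m))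
    (hmono : ∀ ω, Monotone fun m => T m ω)
    (hint : ∀ m, ∫⁻ ω, (T m ω : ℝ≥0∞) ∂P < ⊤)
    (hconv : ∀ᵐ ω ∂P, Tendsto (fun m => (T m ω : ℕ∞)) atTop (nhds (hit0 X ω))) :
    Tendsto (fun m => ∫⁻ ω, (X (T m ω) ω : ℝ≥0∞) ∂P) atTop (nhds ⊤) := by
  haveI := hC.isProb
  have hl := hC.l_pos
  have hr := hC.r_pos
  set xk : ℝ := xp l r k with hxk_def
  have hxk : 1 ≤ xk := one_le_xp hl hr hC.one_le_k
  set I : ℕ → ℝ≥0∞ := fun m => ∫⁻ ω, (X (T m ω) ω : ℝ≥0∞) ∂P with hI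
  have hXT : ∀ m, Measurable fun ω => X (T m ω) ω :=
    fun m => meas_pair (stop_measurable hC.meas (hstop m)) hC.meas
  have hostx : ∀ m, ∫⁻ ω, ENNReal.ofReal (xp l r (X (T m ω) ω)) ∂P = ENNReal.ofReal xk :=
    fun m => ost_x hC htlim (hstop m) (hint m)
  -- the middle-zone sets and their probabilities
  set A : ℕ → ℕ → Set Ω := fun m N => {ω | 1 ≤ X (T m ω) ω ∧ X (T m ω) ω ≤ N} with hA
  have hAmeas : ∀ m N, MeasurableSet (A m N) := by
    intro m N
    have : A m N = (fun ω => X (T m ω) ω) ⁻¹' {q | 1 ≤ q ∧ q ≤ N} := rfl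
    rw [this]
    exact hXT m trivial
  have hPA : ∀ N, Tendsto (fun m => P (A m N)) atTop (𝓝 0) := by
    intro N
    set F : ℕ → Ω → ℝ≥0∞ := fun m ω => (A m N).indicator (fun _ => (1:ℝ≥0∞)) ω with hF
    have hFmeas : ∀ m, Measurable (F m) := fun m =>
      (measurable_const.indicator (hAmeas m N))
    have hFle : ∀ m, F m ≤ᵐ[P] fun _ => (1:ℝ≥0∞) := by
      intro m
      filter_upwards with ω
      by_cases h : ω ∈ A m N <;> simp [hF, h]
    have hFlim : ∀ᵐ ω ∂P, Tendsto (fun m => F m ω) atTop (𝓝 0) := by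
      filter_upwards [ae_eventually_out hC T hstop hmono hconv N] with ω hω
      apply tendsto_const_nhds.congr'
      filter_upwards [hω] with m hm
      have : ω ∉ A m N := hm
      simp [hF, this]
    have := tendsto_lintegral_of_dominated_convergence (fun _ => (1:ℝ≥0∞)) hFmeas hFle
      (by simp) hFlim
    simp only [lintegral_zero] at this
    apply this.congr
    intro m
    rw [hF]
    simp only
    rw [lintegral_indicator_const (hAmeas m N), one_mul]
  -- conclusion via `C < I m` eventually
  apply ENNReal.tendsto_nhds_top
  intro n
  set δ : ℝ := xk / (8 * ((n:ℝ) + 1)) with hδ_def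
  have hδpos : 0 < δ := by
    apply div_pos (by linarith)
    positivity
  obtain ⟨N, hN1, hNlin⟩ := xp_linear_bound hl hr htlim hδpos
  -- key inequality
  have hkey : ∀ m, ENNReal.ofReal xk ≤ ENNReal.ofReal (xp l r N) * P (A m N)
      + ENNReal.ofReal (2*δ) * I m := by
    intro m
    have hpt : ∀ ω, ENNReal.ofReal (xp l r (X (T m ω) ω))
        ≤ (A m N).indicator (fun _ => ENNReal.ofReal (xp l r N)) ω
          + ENNReal.ofReal (2*δ) * (X (T m ω) ω : ℝ≥0∞) := by
      intro ω
      set q := X (T m ω) ω with hq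
      by_cases h1 : 1 ≤ q ∧ q ≤ N
      · have hmem : ω ∈ A m N := h1
        rw [Set.indicator_of_mem hmem]
        exact le_trans (ENNReal.ofReal_le_ofReal (xp_mono hl hr h1.2)) le_self_add
      · rcases Nat.eq_zero_or_pos q with h0 | hp
        · rw [h0, xp_zero]
          simp
        · have hqN : N < q := by omega
          have : xp l r q ≤ 2*δ*q := hNlin q hqN
          calc ENNReal.ofReal (xp l r q) ≤ ENNReal.ofReal (2*δ*q) :=
                ENNReal.ofReal_le_ofReal this
            _ = ENNReal.ofReal (2*δ) * (q : ℝ≥0∞) := by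
                rw [ENNReal.ofReal_mul (by positivity), ENNReal.ofReal_natCast]
            _ ≤ _ := le_add_self
    have hcast : Measurable fun ω => ((X (T m ω) ω : ℕ) : ℝ≥0∞) := by
      exact (measurable_from_top (f := fun p : ℕ => (p : ℝ≥0∞))).comp (hXT m)
    calc ENNReal.ofReal xk = ∫⁻ ω, ENNReal.ofReal (xp l r (X (T m ω) ω)) ∂P :=
          (hostx m).symm
      _ ≤ ∫⁻ ω, ((A m N).indicator (fun _ => ENNReal.ofReal (xp l r N)) ω
          + ENNReal.ofReal (2*δ) * (X (T m ω) ω : ℝ≥0∞)) ∂P := lintegral_mono hpt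
      _ = ENNReal.ofReal (xp l r N) * P (A m N) + ENNReal.ofReal (2*δ) * I m := by
          rw [lintegral_add_left (measurable_const.indicator (hAmeas m N)),
            lintegral_indicator_const (hAmeas m N),
            lintegral_const_mul _ hcast]
  -- eventually the first term is < half
  set half : ℝ≥0∞ := ENNReal.ofReal (xk/2) with hhalf_def
  have hhalfpos : 0 < half := ENNReal.ofReal_pos.mpr (by linarith)
  have htend : Tendsto (fun m => ENNReal.ofReal (xp l r N) * P (A m N)) atTop (𝓝 0) := by
    have := ENNReal.Tendsto.const_mul (a := ENNReal.ofReal (xp l r N)) (hPA N)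
      (Or.inr ENNReal.ofReal_ne_top)
    simpa using this
  have hev : ∀ᶠ m in atTop, ENNReal.ofReal (xp l r N) * P (A m N) < half :=
    htend.eventually_lt_const hhalfpos
  filter_upwards [hev] with m hm
  by_contra hcon
  push_neg at hcon
  have hb : ENNReal.ofReal (2*δ) * I m < half := by
    have h1 : ENNReal.ofReal (2*δ) * I m ≤ ENNReal.ofReal (2*δ) * (n : ℝ≥0∞) :=
      mul_le_mul_right hcon _
    have h2 : ENNReal.ofReal (2*δ) * (n : ℝ≥0∞) = ENNReal.ofReal (2*δ*n) := by
      rw [show ((n:ℕ) : ℝ≥0∞) = ENNReal.ofReal (n:ℝ) from (ENNReal.ofReal_natCast n).symm,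
        ← ENNReal.ofReal_mul (by positivity : (0:ℝ) ≤ 2*δ)]
    have h3 : 2*δ*(n:ℝ) ≤ xk/4 := by
      have hδe : δ * (8*((n:ℝ)+1)) = xk := by
        rw [hδ_def]
        field_simp
      nlinarith [hδpos.le, Nat.cast_nonneg (α := ℝ) n]
    have h4 : ENNReal.ofReal (2*δ*n) < half := by
      rw [hhalf_def]
      apply ENNReal.ofReal_lt_ofReal_iff (by linarith) |>.mpr
      linarith
    calc ENNReal.ofReal (2*δ) * I m ≤ ENNReal.ofReal (2*δ*n) := h2 ▸ h1
      _ < half := h4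
  have hsum : ENNReal.ofReal (xp l r N) * P (A m N) + ENNReal.ofReal (2*δ) * I m
      < half + half := ENNReal.add_lt_add hm hb
  have hhh : half + half = ENNReal.ofReal xk := by
    rw [hhalf_def, ← ENNReal.ofReal_add (by linarith) (by linarith)]
    congr 1
    ring
  exact lt_irrefl _ (lt_of_le_of_lt (hkey m) (hhh ▸ hsum))
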